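/- If Φ¹, Φ² is a pair of orthogonal quantum Latin squares of dimension d₁ and Ψ¹, Ψ² is a pair of orthogonal quantum Latin squares of dimension d₂, then the arrays Φ and Ψ indexed by ([d₁]×[d₂])×([d₁]×[d₂]) with entries Φ_{(i,m),(j,n)} = Φ¹_{i,j} ⊗ Ψ¹_{m,n} and Ψ_{(i,m),(j,n)} = Φ²_{i,j} ⊗ Ψ²_{m,n} form a pair of orthogonal quantum Latin squares of dimension d₁d₂ on ℂ^{d₁} ⊗ ℂ^{d₂}. -/

import Mathlib

noncomputable section

/-- The inner product on a complex inner product space, as a function into `ℂ`. -/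
def ip {E : Type*} [NormedAddCommGroup E] [InnerProductSpace ℂ E] (x y : E) : ℂ :=
  inner ℂ x y

/-- Concrete tensor product `ℂ^a ⊗ ℂ^b ≃ ℂ^(a × b)` of two vectors:
`(u ⊗ v) (p, q) = u p * v q`. -/
def tens {a b : Type*} [Fintype a] [Fintype b] (u : EuclideanSpace ℂ a)
    (v : EuclideanSpace ℂ b) : EuclideanSpace ℂ (a × b) :=
  WithLp.toLp 2 (fun p : a × b => u p.1 * v p.2)

/-- A quantum Latin square over index set `ι` with values in the Hilbert space `E`:
an `ι × ι` array of vectors whose rows and columns are orthonormal bases. -/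
def IsQLSOn {ι : Type*} {E : Type*} [NormedAddCommGroup E] [InnerProductSpace ℂ E]
    (Φ : ι → ι → E) : Prop :=
  (∀ i, Orthonormal ℂ (Φ i)) ∧ (∀ j, Orthonormal ℂ (fun i => Φ i j))

/-- Orthogonality of two quantum Latin squares:
`⟨Φ_{i,j},Φ_{i',j'}⟩⟨Ψ_{i,j},Ψ_{i',j'}⟩ = δ_{ii'}δ_{jj'}`, i.e. the tensor products
`Φ_{i,j} ⊗ Ψ_{i,j}` form an orthonormal basis of `E ⊗ E`. -/
def OrthQLSOn {ι : Type*} [DecidableEq ι] {E : Type*} [NormedAddCommGroup E] [InnerProductSpace ℂ E]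
    (Φ Ψ : ι → ι → E) : Prop :=
  ∀ i j i' j', ip (Φ i j) (Φ i' j') * ip (Ψ i j) (Ψ i' j') =
    if i = i' ∧ j = j' then 1 else 0

lemma ip_tens {a b : Type*} [Fintype a] [Fintype b] (u u' : EuclideanSpace ℂ a)
    (v v' : EuclideanSpace ℂ b) : ip (tens u v) (tens u' v') = ip u u' * ip v v' := by
  simp only [ip, tens, PiLp.toLp_apply, PiLp.inner_apply, RCLike.inner_apply, Fintype.sum_prod_type,
    ← Finset.sum_mul, ← Finset.mul_sum, map_mul]
  rw [Finset.sum_mul_sum]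
  congr 1; ext i; congr 1; ext j; ring

lemma orthonormal_tens {a b : Type*} [Fintype a] [Fintype b] [DecidableEq a] [DecidableEq b]
    {f : a → EuclideanSpace ℂ a} {g : b → EuclideanSpace ℂ b}
    (hf : Orthonormal ℂ f) (hg : Orthonormal ℂ g) :
    Orthonormal ℂ (fun p : a × b => tens (f p.1) (g p.2)) := by
  rw [orthonormal_iff_ite] at *
  intro p q
  show ip (tens (f p.1) (g p.2)) (tens (f q.1) (g q.2)) = _
  rw [ip_tens]
  simp only [ip, hf, hg, Prod.ext_iff, ite_and]
  by_cases h1 : p.1 = q.1 <;> by_cases h2 : p.2 = q.2 <;> simp [h1, h2]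

set_option maxHeartbeats 1000000 in
/-- Direct product construction: if `Φ¹, Φ²` are orthogonal quantum Latin squares of
dimension `d₁` and `Ψ¹, Ψ²` are orthogonal quantum Latin squares of dimension `d₂`, then
the arrays with entries `Φ_{(i,m),(j,n)} = Φ¹_{i,j} ⊗ Ψ¹_{m,n}` and
`Ψ_{(i,m),(j,n)} = Φ²_{i,j} ⊗ Ψ²_{m,n}` form a pair of orthogonal quantum Latin squares
of dimension `d₁d₂` on `ℂ^{d₁} ⊗ ℂ^{d₂}`. -/
theorem direct_product_orth_qls {d₁ d₂ : ℕ}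
    (Φ₁ Φ₂ : Fin d₁ → Fin d₁ → EuclideanSpace ℂ (Fin d₁))
    (Ψ₁ Ψ₂ : Fin d₂ → Fin d₂ → EuclideanSpace ℂ (Fin d₂))
    (hΦ₁ : IsQLSOn Φ₁) (hΦ₂ : IsQLSOn Φ₂) (hΨ₁ : IsQLSOn Ψ₁) (hΨ₂ : IsQLSOn Ψ₂)
    (hΦ : OrthQLSOn Φ₁ Φ₂) (hΨ : OrthQLSOn Ψ₁ Ψ₂) :
    IsQLSOn (fun r c : Fin d₁ × Fin d₂ => tens (Φ₁ r.1 c.1) (Ψ₁ r.2 c.2)) ∧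
    IsQLSOn (fun r c : Fin d₁ × Fin d₂ => tens (Φ₂ r.1 c.1) (Ψ₂ r.2 c.2)) ∧
    OrthQLSOn (fun r c : Fin d₁ × Fin d₂ => tens (Φ₁ r.1 c.1) (Ψ₁ r.2 c.2))
      (fun r c : Fin d₁ × Fin d₂ => tens (Φ₂ r.1 c.1) (Ψ₂ r.2 c.2)) := by
  refine ⟨⟨?_, ?_⟩, ⟨?_, ?_⟩, ?_⟩
  · intro r; exact orthonormal_tens (hΦ₁.1 r.1) (hΨ₁.1 r.2)
  · intro c
    show Orthonormal ℂ (fun p : Fin d₁ × Fin d₂ => tens (Φ₁ p.1 c.1) (Ψ₁ p.2 c.2))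
    exact orthonormal_tens (f := fun i => Φ₁ i c.1) (g := fun m => Ψ₁ m c.2) (hΦ₁.2 c.1) (hΨ₁.2 c.2)
  · intro r; exact orthonormal_tens (hΦ₂.1 r.1) (hΨ₂.1 r.2)
  · intro c
    show Orthonormal ℂ (fun p : Fin d₁ × Fin d₂ => tens (Φ₂ p.1 c.1) (Ψ₂ p.2 c.2))
    exact orthonormal_tens (f := fun i => Φ₂ i c.1) (g := fun m => Ψ₂ m c.2) (hΦ₂.2 c.1) (hΨ₂.2 c.2)
  intro i j i' j'
  simp only [ip_tens]
  have hΦ' := hΦ i.1 j.1 i'.1 j'.1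
  have hΨ' := hΨ i.2 j.2 i'.2 j'.2
  calc ip (Φ₁ i.1 j.1) (Φ₁ i'.1 j'.1) * ip (Ψ₁ i.2 j.2) (Ψ₁ i'.2 j'.2) *
        (ip (Φ₂ i.1 j.1) (Φ₂ i'.1 j'.1) * ip (Ψ₂ i.2 j.2) (Ψ₂ i'.2 j'.2))
      = (ip (Φ₁ i.1 j.1) (Φ₁ i'.1 j'.1) * ip (Φ₂ i.1 j.1) (Φ₂ i'.1 j'.1)) *
        (ip (Ψ₁ i.2 j.2) (Ψ₁ i'.2 j'.2) * ip (Ψ₂ i.2 j.2) (Ψ₂ i'.2 j'.2)) := by ring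
    _ = _ := by
        rw [hΦ', hΨ']
        simp only [Prod.ext_iff, ite_and]
        by_cases h1 : i.1 = i'.1 <;> by_cases h2 : j.1 = j'.1 <;>
          by_cases h3 : i.2 = i'.2 <;> by_cases h4 : j.2 = j'.2 <;>
          simp [h1, h2, h3, h4]
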